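/- The center of distances of the Cantor ternary set is {0} ∪ {2/3^n : n ≥ 1}. -/

import Mathlib

open Set

noncomputable def centerOfDistances (X : Set ℝ) : Set ℝ :=
  {α | 0 ≤ α ∧ ∀ x ∈ X, ∃ y ∈ X, |x - y| = α}

noncomputable def subsums (a : ℕ → ℝ) : Set ℝ :=
  {x | ∃ A : Set ℕ, x = ∑' n : A, a n}

noncomputable def cantorval : Set ℝ :=
  {x | ∃ d : ℕ → ℝ, (∀ n, d n ∈ ({0, 2, 3, 5} : Set ℝ)) ∧
    x = ∑' n : ℕ, d n / 4 ^ (n + 1)}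

noncomputable def aa : ℕ → ℝ := fun n => 2 / 3 ^ (n + 1)

lemma aa_nonneg (n : ℕ) : 0 ≤ aa n := by unfold aa; positivity

lemma aa_eq (n : ℕ) : aa n = (2/3) * (1/3)^n := by
  unfold aa; rw [pow_succ]; field_simp; rw [← mul_pow]; norm_num

lemma summable_aa : Summable aa := by
  have : Summable (fun n : ℕ => (2/3 : ℝ) * (1/3)^n) :=
    (summable_geometric_of_lt_one (by norm_num) (by norm_num)).mul_left _
  exact this.congr (fun n => (aa_eq n).symm)

lemma tsum_aa : ∑' n, aa n = 1 := by
  calc ∑' n, aa n = ∑' n, (2/3:ℝ) * (1/3)^n := tsum_congr aa_eq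
  _ = (2/3) * ∑' n, (1/3:ℝ)^n := tsum_mul_left
  _ = 1 := by rw [tsum_geometric_of_lt_one (by norm_num) (by norm_num)]; norm_num

noncomputable def sA (A : Set ℕ) : ℝ := ∑' n : A, aa n

lemma sA_eq_indicator (A : Set ℕ) : sA A = ∑' n, A.indicator aa n := tsum_subtype A aa

lemma summable_ind (A : Set ℕ) : Summable (A.indicator aa) := summable_aa.indicator A

lemma sA_nonneg (A : Set ℕ) : 0 ≤ sA A := by
  rw [sA_eq_indicator]
  exact tsum_nonneg (fun n => Set.indicator_nonneg (fun m _ => aa_nonneg m) n)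

lemma sA_mono {A B : Set ℕ} (h : A ⊆ B) : sA A ≤ sA B := by
  rw [sA_eq_indicator, sA_eq_indicator]
  exact Summable.tsum_le_tsum (fun n => Set.indicator_le_indicator_of_subset h aa_nonneg n)
    (summable_ind A) (summable_ind B)

lemma sA_univ : sA univ = 1 := by
  rw [sA_eq_indicator]; simp only [Set.indicator_univ]; exact tsum_aa

lemma sA_le_one (A : Set ℕ) : sA A ≤ 1 := sA_univ ▸ sA_mono (subset_univ A)

lemma sA_insert {A : Set ℕ} {n : ℕ} (h : n ∉ A) : sA (insert n A) = aa n + sA A := by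
  rw [sA_eq_indicator, sA_eq_indicator]
  have hd : Disjoint ({n} : Set ℕ) A := by simpa using h
  have hu : (insert n A : Set ℕ) = {n} ∪ A := Set.insert_eq n A
  have heq : ∀ k, (insert n A).indicator aa k = ({n} : Set ℕ).indicator aa k + A.indicator aa k := by
    intro k
    rw [hu, Set.indicator_union_of_disjoint hd]
  rw [tsum_congr heq, Summable.tsum_add (summable_ind {n}) (summable_ind A)]
  congr 1
  have : ({n} : Set ℕ).indicator aa = fun k => if k = n then aa n else 0 := by
    funext k
    by_cases hk : k = n <;> simp [Set.indicator_apply, hk]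
  rw [this, tsum_ite_eq]

lemma le_sA {A : Set ℕ} {n : ℕ} (h : n ∈ A) : aa n ≤ sA A := by
  rw [sA_eq_indicator]
  have := Summable.le_tsum (summable_ind A) n
    (fun m _ => Set.indicator_nonneg (fun m _ => aa_nonneg m) m)
  simpa [Set.indicator_of_mem h] using this

lemma sA_image (A : Set ℕ) : sA ((· + 1) '' A) = sA A / 3 := by
  unfold sA
  have hinj : Function.Injective (· + 1 : ℕ → ℕ) := add_left_injective 1
  rw [← (Equiv.Set.image (· + 1 : ℕ → ℕ) A hinj).tsum_eq
        (fun n : ((· + 1) '' A : Set ℕ) => aa n)]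
  have : ∀ x : A, aa ((Equiv.Set.image (· + 1 : ℕ → ℕ) A hinj x : ℕ)) = aa x / 3 := by
    intro x
    have hx : ((Equiv.Set.image (· + 1 : ℕ → ℕ) A hinj x : ℕ)) = (x : ℕ) + 1 := rfl
    rw [hx]
    unfold aa
    rw [pow_succ]
    ring
  rw [tsum_congr this]
  exact tsum_div_const

lemma gap {A : Set ℕ} : sA A ≤ 1/3 ∨ 2/3 ≤ sA A := by
  by_cases h : 0 ∈ A
  · right
    have := le_sA h
    have h0 : aa 0 = 2/3 := by norm_num [aa]
    linarith
  · left
    have hsub : A ⊆ ({0}ᶜ : Set ℕ) := fun n hn => by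
      simp only [mem_compl_iff, mem_singleton_iff]
      rintro rfl; exact h hn
    have h1 : sA ({0}ᶜ : Set ℕ) = 1/3 := by
      have h0 : (0:ℕ) ∉ ({0}ᶜ : Set ℕ) := by simp
      have hins : insert 0 ({0}ᶜ : Set ℕ) = univ := by
        ext n; by_cases hn : n = 0 <;> simp [hn]
      have := sA_insert h0
      rw [hins, sA_univ] at this
      have h0' : aa 0 = 2/3 := by norm_num [aa]
      linarith
    calc sA A ≤ sA ({0}ᶜ : Set ℕ) := sA_mono hsub
    _ = 1/3 := h1

lemma zero_mem : (0:ℝ) ∈ subsums aa := by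
  refine ⟨∅, ?_⟩
  show (0:ℝ) = sA ∅
  rw [sA]
  exact tsum_empty.symm

lemma mem_C_iff {x : ℝ} : x ∈ subsums aa ↔ ∃ A : Set ℕ, x = sA A := Iff.rfl

lemma one_mem : (1:ℝ) ∈ subsums aa := ⟨univ, sA_univ.symm⟩

lemma C_sub {x : ℝ} (h : x ∈ subsums aa) : 0 ≤ x ∧ x ≤ 1 := by
  obtain ⟨A, rfl⟩ := mem_C_iff.mp h
  exact ⟨sA_nonneg A, sA_le_one A⟩

lemma div3_mem {x : ℝ} (h : x ∈ subsums aa) : x/3 ∈ subsums aa := by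
  obtain ⟨A, rfl⟩ := mem_C_iff.mp h
  exact ⟨(· + 1) '' A, (sA_image A).symm⟩

lemma third_mem : (1/3 : ℝ) ∈ subsums aa := by
  have := div3_mem one_mem
  simpa [one_div] using this

lemma mul3_mem {A : Set ℕ} (h0 : 0 ∉ A) : 3 * sA A ∈ subsums aa := by
  refine ⟨{n | n + 1 ∈ A}, ?_⟩
  have himg : (· + 1) '' {n | n + 1 ∈ A} = A := by
    ext n
    constructor
    · rintro ⟨m, hm, rfl⟩; exact hm
    · intro hn
      rcases n with _ | m
      · exact absurd hn h0
      · exact ⟨m, hn, rfl⟩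
  have h2 := sA_image {n | n + 1 ∈ A}
  rw [himg] at h2
  show 3 * sA A = sA {n | n + 1 ∈ A}
  rw [h2]; ring

lemma S_sub_C {α : ℝ} (h : α ∈ centerOfDistances (subsums aa)) : α ∈ subsums aa := by
  obtain ⟨h0, h⟩ := h
  obtain ⟨y, hy, hxy⟩ := h 0 zero_mem
  have hy0 := (C_sub hy).1
  have hz : |0 - y| = y := by rw [zero_sub, abs_neg, abs_of_nonneg hy0]
  rw [hz] at hxy
  rwa [← hxy]

lemma gapC {x : ℝ} (h : x ∈ subsums aa) : x ≤ 1/3 ∨ 2/3 ≤ x := by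
  obtain ⟨A, rfl⟩ := mem_C_iff.mp h
  exact gap

lemma scaleS {α : ℝ} (h : α ∈ centerOfDistances (subsums aa)) (h13 : α ≤ 1/3) :
    3 * α ∈ centerOfDistances (subsums aa) := by
  obtain ⟨h0, h⟩ := h
  refine ⟨by linarith, fun x hx => ?_⟩
  have hx1 := (C_sub hx).2
  have hx0 := (C_sub hx).1
  obtain ⟨y, hy, hxy⟩ := h (x/3) (div3_mem hx)
  have hy0 := (C_sub hy).1
  have h2 := abs_le.mp hxy.le
  rcases gapC hy with hyle | hyge
  · obtain ⟨B, rfl⟩ := mem_C_iff.mp hy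
    have h0B : 0 ∉ B := by
      intro hB
      have hle := le_sA hB
      have ha0 : aa 0 = 2/3 := by norm_num [aa]
      rw [ha0] at hle
      linarith
    refine ⟨3 * sA B, mul3_mem h0B, ?_⟩
    have hr : x - 3 * sA B = 3 * (x/3 - sA B) := by ring
    rw [hr, abs_mul, abs_of_nonneg (by norm_num : (0:ℝ) ≤ 3), hxy]
  · have hy23 : y ≤ 2/3 := by linarith [h2.1]
    have hyeq : y = 2/3 := le_antisymm hy23 hyge
    have hα3 : α = 1/3 := by
      have := h2.1
      linarith
    have hx3 : x = 1 := by
      have := h2.1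
      linarith
    refine ⟨0, zero_mem, ?_⟩
    rw [hx3, hα3]
    norm_num

lemma base {α : ℝ} (h : α ∈ centerOfDistances (subsums aa)) (h13 : 1/3 < α) : α = 2/3 := by
  have hC := S_sub_C h
  have hle := (C_sub hC).2
  rcases gapC hC with h1 | hge
  · linarith
  · by_contra hne
    have hgt : 2/3 < α := lt_of_le_of_ne hge (Ne.symm hne)
    obtain ⟨y, hy, hxy⟩ := h.2 (1/3) third_mem
    have hyb := C_sub hy
    have habs : |1/3 - y| ≤ 2/3 := abs_le.mpr ⟨by linarith [hyb.2], by linarith [hyb.1]⟩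
    rw [hxy] at habs
    linarith

lemma key : ∀ n : ℕ, ∀ α : ℝ, α ∈ centerOfDistances (subsums aa) → 1/3^(n+1) < α →
    ∃ m : ℕ, α = 2/3^(m+1) := by
  intro n
  induction n with
  | zero =>
    intro α hα hlt
    refine ⟨0, ?_⟩
    have hb : α = 2/3 := base hα (by norm_num at hlt ⊢; linarith)
    rw [hb]; norm_num
  | succ n ih =>
    intro α hα hlt
    by_cases h : 1/3^(n+1) < α
    · exact ih α hα h
    · push_neg at h
      have h31 : (3:ℝ) ≤ 3^(n+1) := by
        calc (3:ℝ) = 3^1 := (pow_one 3).symm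
        _ ≤ 3^(n+1) := pow_le_pow_right₀ (by norm_num) (by omega)
      have h13 : α ≤ 1/3 := le_trans h (one_div_le_one_div_of_le (by norm_num) h31)
      have h3 := scaleS hα h13
      have hlt3 : 1/3^(n+1) < 3*α := by
        have he : (3:ℝ)^(n+1+1) = 3^(n+1)*3 := pow_succ 3 (n+1)
        rw [he] at hlt
        have hr : (1:ℝ)/3^(n+1) = 3 * (1/(3^(n+1)*3)) := by
          have hp : (0:ℝ) < 3^(n+1) := by positivity
          field_simp
        rw [hr]
        linarith
      obtain ⟨m, hm⟩ := ih (3*α) h3 hlt3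
      refine ⟨m+1, ?_⟩
      have hp : (0:ℝ) < 3^(m+1) := by positivity
      rw [pow_succ]
      field_simp at hm ⊢
      linarith

lemma zero_in_S : (0:ℝ) ∈ centerOfDistances (subsums aa) :=
  ⟨le_refl 0, fun x hx => ⟨x, hx, by simp⟩⟩

lemma aa_in_S (n : ℕ) : aa n ∈ centerOfDistances (subsums aa) := by
  refine ⟨aa_nonneg n, fun x hx => ?_⟩
  obtain ⟨A, rfl⟩ := mem_C_iff.mp hx
  by_cases h : n ∈ A
  · refine ⟨sA (A \ {n}), ⟨A \ {n}, rfl⟩, ?_⟩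
    have hins : insert n (A \ {n}) = A := by
      rw [Set.insert_diff_singleton]; exact Set.insert_eq_self.mpr h
    have hnotin : n ∉ A \ {n} := fun hh => hh.2 rfl
    have heq := sA_insert hnotin
    rw [hins] at heq
    rw [heq, add_sub_cancel_right]
    exact abs_of_nonneg (aa_nonneg n)
  · refine ⟨sA (insert n A), ⟨insert n A, rfl⟩, ?_⟩
    rw [sA_insert h]
    have hr : sA A - (aa n + sA A) = -(aa n) := by ring
    rw [hr, abs_neg, abs_of_nonneg (aa_nonneg n)]

theorem stmt5 :
    centerOfDistances (subsums (fun n => (2 : ℝ) / 3 ^ (n + 1))) =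
      {0} ∪ {t : ℝ | ∃ n : ℕ, t = 2 / 3 ^ (n + 1)} := by
  have haa : (fun n => (2:ℝ)/3^(n+1)) = aa := rfl
  rw [haa]
  ext α
  simp only [Set.mem_union, Set.mem_singleton_iff, Set.mem_setOf_eq]
  constructor
  · intro hα
    rcases eq_or_lt_of_le hα.1 with h0 | h0
    · left; exact h0.symm
    · right
      obtain ⟨n, hn⟩ := exists_pow_lt_of_lt_one h0 (by norm_num : (1/3:ℝ) < 1)
      have hlt : 1/3^(n+1) < α := by
        have h1 : ((1:ℝ)/3)^n = 1/3^n := by rw [div_pow, one_pow]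
        have hq : (1:ℝ)/3^(n+1) ≤ 1/3^n :=
          one_div_le_one_div_of_le (by positivity) (pow_le_pow_right₀ (by norm_num) (by omega))
        rw [h1] at hn
        linarith
      exact key n α hα hlt
  · rintro (rfl | ⟨n, rfl⟩)
    · exact zero_in_S
    · exact aa_in_S n
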